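/- Let (τ_j)_{j=1}^n and (ω_j)_{j=1}^n be Parseval frames for a finite-dimensional Hilbert space H (i.e., ‖h‖² = ∑_j |⟨h, τ_j⟩|² and ‖h‖² = ∑_j |⟨h, ω_j⟩|² for all h). Then for every nonzero h ∈ H, ‖θ_τ h‖_0 · ‖θ_ω h‖_0 ≥ 1 / max_{j,k} |⟨τ_j, ω_k⟩|², where θ_τ h = (⟨h, τ_j⟩)_{j=1}^n and ‖·‖_0 counts nonzero coordinates. -/

import Mathlib

open scoped ComplexConjugate

/-- Reconstruction from a Parseval frame. -/
lemma parseval_frame_reconstruction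
    {H : Type*} [NormedAddCommGroup H] [InnerProductSpace ℂ H]
    {n : ℕ} (τ : Fin n → H)
    (hτ : ∀ h : H, ‖h‖ ^ 2 = ∑ j, ‖(inner ℂ h (τ j) : ℂ)‖ ^ 2) (x : H) :
    (∑ j, (inner ℂ (τ j) x : ℂ) • τ j) = x := by
  set L : H →ₗ[ℂ] H :=
    { toFun := fun x => (∑ j, (inner ℂ (τ j) x : ℂ) • τ j) - x
      map_add' := by
        intro a b
        simp only [inner_add_right, add_smul, Finset.sum_add_distrib]
        abel
      map_smul' := by
        intro c a
        simp only [inner_smul_right, mul_smul, RingHom.id_apply, smul_sub, Finset.smul_sum]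
        } with hL
  have hzero : L = 0 := by
    rw [← inner_map_self_eq_zero]
    intro x
    simp only [hL, LinearMap.coe_mk, AddHom.coe_mk, inner_sub_left, sum_inner, inner_smul_left]
    have key : ∀ j : Fin n, (starRingEnd ℂ) (inner ℂ (τ j) x) * (inner ℂ (τ j) x : ℂ) =
        ((‖(inner ℂ x (τ j) : ℂ)‖ : ℂ)) ^ 2 := fun j => by
      rw [RCLike.conj_mul, norm_inner_symm]; norm_cast
    rw [Finset.sum_congr rfl (fun j _ => key j), inner_self_eq_norm_sq_to_K]
    have : ∑ j : Fin n, ((‖(inner ℂ x (τ j) : ℂ)‖ : ℂ)) ^ 2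
        = ((∑ j, ‖(inner ℂ x (τ j) : ℂ)‖ ^ 2 : ℝ) : ℂ) := by push_cast; ring
    rw [this, ← hτ x]
    simp
  have := congrFun (congrArg (fun f => f.toFun) hzero) x
  simpa [hL, sub_eq_zero] using this

/-- Donoho–Stark–Elad–Bruckstein–Ricaud–Torrésani uncertainty principle: for two Parseval
frames `τ, ω` of a finite-dimensional Hilbert space and every nonzero `h`,
`‖θ_τ h‖₀ ⬝ ‖θ_ω h‖₀ ≥ 1 / max_{j,k} |⟨τ_j, ω_k⟩|²`. -/
theorem donoho_stark_elad_bruckstein_ricaud_torresani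
    {H : Type*} [NormedAddCommGroup H] [InnerProductSpace ℂ H] [FiniteDimensional ℂ H]
    {n : ℕ} (τ ω : Fin n → H)
    (hτ : ∀ h : H, ‖h‖ ^ 2 = ∑ j, ‖(inner ℂ h (τ j) : ℂ)‖ ^ 2)
    (hω : ∀ h : H, ‖h‖ ^ 2 = ∑ j, ‖(inner ℂ h (ω j) : ℂ)‖ ^ 2)
    (h : H) (hh : h ≠ 0) :
    ((Finset.univ.filter (fun j => (inner ℂ h (τ j) : ℂ) ≠ 0)).card : ℝ) *
      ((Finset.univ.filter (fun k => (inner ℂ h (ω k) : ℂ) ≠ 0)).card : ℝ) ≥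
      1 / (⨆ j, ⨆ k, ‖(inner ℂ (τ j) (ω k) : ℂ)‖) ^ 2 := by
  classical
  have hhn : (0:ℝ) < ‖h‖ ^ 2 := by
    have := norm_pos_iff.mpr hh
    positivity
  have hn : Nonempty (Fin n) := by
    rcases Nat.eq_zero_or_pos n with rfl | hpos
    · exfalso
      have := hτ h
      simp at this
      exact hh this
    · exact ⟨⟨0, hpos⟩⟩
  set M : ℝ := ⨆ j, ⨆ k, ‖(inner ℂ (τ j) (ω k) : ℂ)‖ with hM
  have hMle : ∀ j k, ‖(inner ℂ (τ j) (ω k) : ℂ)‖ ≤ M := by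
    intro j k
    refine le_trans (le_ciSup (f := fun k => ‖(inner ℂ (τ j) (ω k) : ℂ)‖)
      (Set.Finite.bddAbove (Set.finite_range _)) k) ?_
    exact le_ciSup (f := fun j => ⨆ k, ‖(inner ℂ (τ j) (ω k) : ℂ)‖)
      (Set.Finite.bddAbove (Set.finite_range _)) j
  have hM0 : 0 ≤ M := le_trans (norm_nonneg _) (hMle hn.some hn.some)
  rcases hM0.eq_or_lt with hMz | hMpos
  · rw [ge_iff_le, ← hMz]
    norm_num
    positivity
  set S := Finset.univ.filter (fun j => (inner ℂ h (τ j) : ℂ) ≠ 0) with hS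
  set T := Finset.univ.filter (fun k => (inner ℂ h (ω k) : ℂ) ≠ 0) with hT
  set A := ∑ j ∈ S, ‖(inner ℂ h (τ j) : ℂ)‖ with hA
  have hA1 : A = ∑ j, ‖(inner ℂ h (τ j) : ℂ)‖ :=
    Finset.sum_subset (Finset.subset_univ _) (fun j _ hj => by
      simp only [hS, Finset.mem_filter, Finset.mem_univ, true_and, not_not] at hj
      simp [hj])
  have hA2 : ∑ j ∈ S, ‖(inner ℂ h (τ j) : ℂ)‖ ^ 2 = ‖h‖ ^ 2 := by
    rw [hτ h]
    exact Finset.sum_subset (Finset.subset_univ _) (fun j _ hj => by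
      simp only [hS, Finset.mem_filter, Finset.mem_univ, true_and, not_not] at hj
      simp [hj])
  have hT2 : ∑ k ∈ T, ‖(inner ℂ h (ω k) : ℂ)‖ ^ 2 = ‖h‖ ^ 2 := by
    rw [hω h]
    exact Finset.sum_subset (Finset.subset_univ _) (fun k _ hk => by
      simp only [hT, Finset.mem_filter, Finset.mem_univ, true_and, not_not] at hk
      simp [hk])
  have recon := parseval_frame_reconstruction τ hτ
  have key : ∀ k, ‖(inner ℂ h (ω k) : ℂ)‖ ≤ M * A := by
    intro k
    have hid : (inner ℂ h (ω k) : ℂ) = ∑ j, (inner ℂ (τ j) (ω k) : ℂ) * inner ℂ h (τ j) := by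
      conv_lhs => rw [← recon (ω k)]
      rw [inner_sum]
      exact Finset.sum_congr rfl fun j _ => by rw [inner_smul_right]
    rw [hid]
    calc ‖∑ j, (inner ℂ (τ j) (ω k) : ℂ) * inner ℂ h (τ j)‖
        ≤ ∑ j, ‖(inner ℂ (τ j) (ω k) : ℂ) * inner ℂ h (τ j)‖ := norm_sum_le _ _
      _ ≤ ∑ j, M * ‖(inner ℂ h (τ j) : ℂ)‖ := Finset.sum_le_sum fun j _ => by
          rw [norm_mul]
          exact mul_le_mul_of_nonneg_right (hMle j k) (norm_nonneg _)
      _ = M * ∑ j, ‖(inner ℂ h (τ j) : ℂ)‖ := (Finset.mul_sum _ _ _).symm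
      _ = M * A := by rw [← hA1]
  have hA0 : 0 ≤ A := Finset.sum_nonneg fun j _ => norm_nonneg _
  have hB : A ^ 2 ≤ (S.card : ℝ) * ‖h‖ ^ 2 := by
    rw [← hA2, hA]
    exact_mod_cast sq_sum_le_card_mul_sum_sq (s := S) (f := fun j => ‖(inner ℂ h (τ j) : ℂ)‖)
  have hC : ‖h‖ ^ 2 ≤ (T.card : ℝ) * (M * A) ^ 2 := by
    rw [← hT2]
    calc ∑ k ∈ T, ‖(inner ℂ h (ω k) : ℂ)‖ ^ 2
        ≤ ∑ k ∈ T, (M * A) ^ 2 :=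
          Finset.sum_le_sum fun k _ => pow_le_pow_left₀ (norm_nonneg _) (key k) 2
      _ = (T.card : ℝ) * (M * A) ^ 2 := by rw [Finset.sum_const, nsmul_eq_mul]
  have main : 1 ≤ (S.card : ℝ) * (T.card : ℝ) * M ^ 2 := by
    have h1 : ‖h‖ ^ 2 ≤ (T.card : ℝ) * M ^ 2 * ((S.card : ℝ) * ‖h‖ ^ 2) := by
      have := mul_le_mul_of_nonneg_left hB
        (by positivity : (0:ℝ) ≤ (T.card : ℝ) * M ^ 2)
      nlinarith [hC]
    nlinarith [h1, hhn]
  rw [ge_iff_le, div_le_iff₀ (by positivity)]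
  linarith [main]
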